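/- Algorithm find_all_paths (depth-first enumeration with pruning condition ι + δ_ĵ < λ − 1, where δ_ĵ is the minimum number of edges from ĵ to r) returns exactly the set of simple paths from the start node to r that use at most λ − 1 edges and avoid forbidden turns. -/

import Mathlib

/-- Lists whose consecutive elements are edges of the graph given by `adj`. -/
def AdjChain {V : Type} (adj : V → Finset V) (π : List V) : Prop :=
  List.Chain' (fun a b => b ∈ adj a) π

/-- The DFS path enumeration with pruning `ι + δ ĵ < λ - 1`, forbidden-turn sets `Γ`
and a fuel parameter for termination.  The current partial path is `π`, the current
node is `i`, and `ι` is the number of edges used so far. -/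
noncomputable def findAllPaths {V : Type} [DecidableEq V] (adj : V → Finset V) (r : V) (lam : ℕ)
    (δ : V → ℕ∞) (Γ : V → V → Finset V) : ℕ → ℕ → V → List V → List (List V)
  | 0, _, _, _ => []
  | fuel + 1, ι, i, π =>
    let π' := π ++ [i]
    if i = r then [π']
    else
      ((adj i).toList.map (fun j =>
        if j ∉ π' ∧ ((ι : ℕ∞) + δ j < ((lam - 1 : ℕ) : ℕ∞)) ∧
            (π.getLast?.all (fun p => decide (j ∉ Γ p i)) = true) then
          findAllPaths adj r lam δ Γ fuel (ι + 1) j π'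
        else [])).flatten

/-- A path is admissible if it is a simple path from `v` to `r` with at most
`λ - 1` edges, respecting adjacency and avoiding forbidden turns. -/
def AdmissiblePath {V : Type} (adj : V → Finset V) (r : V) (lam : ℕ)
    (Γ : V → V → Finset V) (v : V) (π : List V) : Prop :=
  π.head? = some v ∧ π.getLast? = some r ∧ π.Nodup ∧ AdjChain adj π ∧
  π.length - 1 ≤ lam - 1 ∧
  ∀ a b c : V, [a, b, c] <:+: π → c ∉ Γ a b

private lemma findAllPaths_main {V : Type} [DecidableEq V]
    (adj : V → Finset V) (r : V) (lam : ℕ) (δ : V → ℕ∞) (Γ : V → V → Finset V)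
    (hδ : ∀ i : V, δ i = sInf {n : ℕ∞ | ∃ π : List V, AdjChain adj π ∧
      π.head? = some i ∧ π.getLast? = some r ∧ ((π.length - 1 : ℕ) : ℕ∞) = n}) :
    ∀ fuel ι (i : V) (π σ : List V),
      ι = π.length → fuel = lam + 1 - ι → ι ≤ lam - 1 → (π ++ [i]).Nodup →
      (σ ∈ findAllPaths adj r lam δ Γ fuel ι i π ↔
        ∃ τ : List V, σ = π ++ i :: τ ∧ (i :: τ).getLast? = some r ∧
          (π ++ i :: τ).Nodup ∧ AdjChain adj (i :: τ) ∧ ι + τ.length ≤ lam - 1 ∧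
          ∀ a b c : V, [a, b, c] <:+: (π.getLast?.toList ++ i :: τ) → c ∉ Γ a b) := by
  intro fuel
  induction fuel with
  | zero => intro ι i π σ h1 h2 h3 h4; omega
  | succ fuel IH =>
    intro ι i π σ h1 h2 h3 h4
    rw [findAllPaths]
    show σ ∈ (if i = r then [π ++ [i]] else _) ↔ _
    by_cases hir : i = r
    · subst hir
      rw [if_pos rfl]
      simp only [List.mem_singleton]
      constructor
      · rintro rfl
        refine ⟨[], rfl, rfl, h4, List.isChain_singleton _, ?_, ?_⟩
        · simpa using h3
        intro a b c hinf
        have hlen := hinf.length_le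
        cases hpl : π.getLast? <;> simp [hpl] at hlen
      · rintro ⟨τ, rfl, hlast, hnd, -, -, -⟩
        cases τ with
        | nil => rfl
        | cons b τ' =>
          exfalso
          rw [List.getLast?_cons_cons] at hlast
          have hr : i ∈ b :: τ' := List.mem_of_getLast? hlast
          have hnd2 : (i :: b :: τ').Nodup := (List.nodup_append.mp (by simpa using hnd)).2.1
          exact (List.nodup_cons.mp hnd2).1 hr
    · rw [if_neg hir]
      rw [List.mem_flatten]
      constructor
      · rintro ⟨l, hl, hσ⟩
        rw [List.mem_map] at hl
        obtain ⟨j, hj, rfl⟩ := hl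
        rw [Finset.mem_toList] at hj
        by_cases hc : j ∉ π ++ [i] ∧ ((ι : ℕ∞) + δ j < ((lam - 1 : ℕ) : ℕ∞)) ∧
            (π.getLast?.all (fun p => decide (j ∉ Γ p i)) = true)
        · rw [if_pos hc] at hσ
          obtain ⟨hj1, hj2, hj3⟩ := hc
          have hι : ι < lam - 1 := by
            have hlt : ((ι : ℕ) : ℕ∞) < ((lam - 1 : ℕ) : ℕ∞) := lt_of_le_of_lt le_self_add hj2
            exact_mod_cast hlt
          have h4' : ((π ++ [i]) ++ [j]).Nodup := by
            rw [List.nodup_append']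
            exact ⟨h4, List.nodup_singleton j,
              fun x hx hxj => hj1 ((List.mem_singleton.mp hxj) ▸ hx)⟩
          obtain ⟨τ', hσeq, hl', hnd', hch', hlen', hturn'⟩ :=
            (IH (ι + 1) j (π ++ [i]) σ (by simp [h1]) (by omega) (by omega) h4').mp hσ
          refine ⟨j :: τ', by simpa using hσeq, ?_, by simpa using hnd', ?_, by
            simp only [List.length_cons]; omega, ?_⟩
          · rw [List.getLast?_cons_cons]; exact hl'
          · exact List.isChain_cons_cons.mpr ⟨hj, hch'⟩
          · intro a b c hinf
            have hturn'' : ∀ a b c : V, [a, b, c] <:+: (i :: j :: τ') → c ∉ Γ a b := by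
              intro a b c h
              apply hturn' a b c
              rwa [List.getLast?_concat, Option.toList_some]
            cases hpl : π.getLast? with
            | none =>
              rw [hpl, Option.toList_none, List.nil_append] at hinf
              exact hturn'' a b c hinf
            | some p =>
              rw [hpl, Option.toList_some, List.singleton_append] at hinf
              rcases List.infix_cons_iff.mp hinf with hpre | hinf2
              · obtain ⟨hap, hpre⟩ := List.cons_prefix_cons.mp hpre
                obtain ⟨hbi, hpre⟩ := List.cons_prefix_cons.mp hpre
                obtain ⟨hcj, -⟩ := List.cons_prefix_cons.mp hpre
                subst hap; subst hbi; subst hcj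
                rw [hpl, Option.all_some, decide_eq_true_iff] at hj3
                exact hj3
              · exact hturn'' a b c hinf2
        · rw [if_neg hc] at hσ
          exact absurd hσ List.not_mem_nil
      · rintro ⟨τ, rfl, hlast, hnd, hch, hlen, hturn⟩
        cases τ with
        | nil => exact absurd (Option.some.inj hlast) hir
        | cons j τ' =>
          obtain ⟨hj, hch'⟩ := List.isChain_cons_cons.mp hch
          have hnd2 : ((π ++ [i]) ++ j :: τ').Nodup := by simpa using hnd
          have hj1 : j ∉ π ++ [i] := by
            intro hjm
            exact (List.nodup_append'.mp hnd2).2.2 hjm List.mem_cons_self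
          have hl' : (j :: τ').getLast? = some r := by
            rwa [List.getLast?_cons_cons] at hlast
          have hδj : δ j ≤ (τ'.length : ℕ∞) := by
            rw [hδ j]
            exact sInf_le ⟨j :: τ', hch', rfl, hl', by simp⟩
          have hlen' : ι + τ'.length + 1 ≤ lam - 1 := by
            simpa [Nat.add_assoc] using hlen
          have hj2 : ((ι : ℕ) : ℕ∞) + δ j < ((lam - 1 : ℕ) : ℕ∞) := by
            calc ((ι : ℕ) : ℕ∞) + δ j ≤ ((ι : ℕ) : ℕ∞) + (τ'.length : ℕ∞) :=
                  add_le_add_right hδj _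
              _ = ((ι + τ'.length : ℕ) : ℕ∞) := by push_cast; ring
              _ < ((lam - 1 : ℕ) : ℕ∞) := by exact_mod_cast (by omega : ι + τ'.length < lam - 1)
          have hj3 : π.getLast?.all (fun p => decide (j ∉ Γ p i)) = true := by
            cases hpl : π.getLast? with
            | none => rfl
            | some p =>
              rw [Option.all_some, decide_eq_true_iff]
              apply hturn p i j
              rw [hpl, Option.toList_some, List.singleton_append]
              exact ⟨[], τ', rfl⟩
          refine ⟨_, List.mem_map.mpr ⟨j, Finset.mem_toList.mpr hj, rfl⟩, ?_⟩
          rw [if_pos ⟨hj1, hj2, hj3⟩]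
          have h4' : ((π ++ [i]) ++ [j]).Nodup := by
            rw [List.nodup_append']
            exact ⟨h4, List.nodup_singleton j,
              fun x hx hxj => hj1 ((List.mem_singleton.mp hxj) ▸ hx)⟩
          refine (IH (ι + 1) j (π ++ [i]) _ (by simp [h1]) (by omega) (by omega) h4').mpr
            ⟨τ', by simp, hl', hnd2, hch', by omega, ?_⟩
          intro a b c hinf
          rw [List.getLast?_concat, Option.toList_some, List.singleton_append] at hinf
          apply hturn a b c
          refine hinf.trans ?_
          cases hpl : π.getLast? with
          | none => simp
          | some p =>
            rw [Option.toList_some, List.singleton_append]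
            exact (List.suffix_cons p _).isInfix

/-- The DFS with shortest-distance pruning returns exactly the admissible paths,
provided `δ i` is the minimum number of edges of a directed path from `i` to `r`. -/
theorem findAllPaths_correct {V : Type} [DecidableEq V]
    (adj : V → Finset V) (r : V) (lam : ℕ) (δ : V → ℕ∞) (Γ : V → V → Finset V)
    (hδ : ∀ i : V, δ i = sInf {n : ℕ∞ | ∃ π : List V, AdjChain adj π ∧
      π.head? = some i ∧ π.getLast? = some r ∧ ((π.length - 1 : ℕ) : ℕ∞) = n})
    (v : V) :
    ∀ π : List V,
      π ∈ findAllPaths adj r lam δ Γ (lam + 1) 0 v [] ↔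
        AdmissiblePath adj r lam Γ v π := by
  intro σ
  rw [findAllPaths_main adj r lam δ Γ hδ (lam + 1) 0 v [] σ rfl (by omega) (by omega)
    (by simp)]
  constructor
  · rintro ⟨τ, rfl, hlast, hnd, hch, hlen, hturn⟩
    refine ⟨rfl, by simpa using hlast, by simpa using hnd, by simpa using hch, by simp; omega, ?_⟩
    intro a b c hinf
    exact hturn a b c (by simpa using hinf)
  · rintro ⟨hhead, hlast, hnd, hch, hlen, hturn⟩
    cases σ with
    | nil => simp at hhead
    | cons x τ =>
      obtain rfl : x = v := by simpa using hhead
      refine ⟨τ, by simp, hlast, by simpa using hnd, hch, by simpa using hlen, ?_⟩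
      intro a b c hinf
      exact hturn a b c (by simpa using hinf)
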